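/- Let G = (V, E) be a finite directed graph with no self-loops and Q ∈ ℕ, Q ≥ 1. Let P = {(x, a) ∈ ℝ^V × ℝ^E : x_u − x_v = a_{(u,v)} for all (u,v) ∈ E, and 0 ≤ x_v ≤ Q for all v ∈ V}. Suppose z₁ = (x₁, a₁) and z₂ = (x₂, a₂) are distinct extreme points of P such that the closed segment [z₁, z₂] is an extreme subset of P (i.e., z₁ and z₂ are adjacent vertices of the polytope, the segment being an edge). Then there exist a subset S ⊆ V inducing a connected subgraph and a nonzero integer c such that x₁ − x₂ = c·χ_S and a₁ − a₂ = c·(χ_{δ⁺(S)} − χ_{δ⁻(S)}). -/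

import Mathlib

open scoped Classical

/-- The undirected support graph of the directed edge set `E`. -/
def undirGraph {V : Type*} (E : Finset (V × V)) : SimpleGraph V where
  Adj u v := u ≠ v ∧ ((u, v) ∈ E ∨ (v, u) ∈ E)
  symm := by
    refine ⟨fun u v h => ?_⟩
    exact ⟨h.1.symm, h.2.elim Or.inr Or.inl⟩
  loopless := by refine ⟨fun u h => ?_⟩; exact h.1 rfl

/-- `S ⊆ V` induces a connected subgraph of the (undirected version of the) graph. -/
def InducesConnected {V : Type*} (E : Finset (V × V)) (S : Set V) : Prop :=
  S.Nonempty ∧ ((undirGraph E).induce S).Connected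

/-- Integer indicator vector of a set of vertices. -/
noncomputable def chiV {V : Type*} (S : Set V) : V → ℤ :=
  S.indicator 1

/-- Integer indicator vector of a set of edges. -/
noncomputable def chiE {V : Type*} {E : Finset (V × V)}
    (T : Set {e : V × V // e ∈ E}) : {e : V × V // e ∈ E} → ℤ :=
  T.indicator 1

/-- Outgoing edges of `S`. -/
def deltaPlus {V : Type*} (E : Finset (V × V)) (S : Set V) :
    Set {e : V × V // e ∈ E} :=
  {e | (e : V × V).1 ∈ S ∧ (e : V × V).2 ∉ S}

/-- Incoming edges of `S`. -/
def deltaMinus {V : Type*} (E : Finset (V × V)) (S : Set V) :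
    Set {e : V × V // e ∈ E} :=
  {e | (e : V × V).1 ∉ S ∧ (e : V × V).2 ∈ S}

/-- The conformal (sign-compatible, coordinatewise) partial order `x ⊑ y`. -/
def Sqle {ι : Type*} (x y : ι → ℤ) : Prop :=
  ∀ i, 0 ≤ x i * y i ∧ |x i| ≤ |y i|

/-- `(x, a)` lies in the integer kernel of `A_TV`. -/
def InKerATV {V : Type*} (E : Finset (V × V)) (x : V → ℤ)
    (a : {e : V × V // e ∈ E} → ℤ) : Prop :=
  ∀ e : {e : V × V // e ∈ E}, x (e : V × V).1 - x (e : V × V).2 = a e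

/-- `(x, a)` is a Graver basis element of `A_TV`: a `⊑`-minimal nonzero
element of the integer kernel. -/
def InGraverATV {V : Type*} (E : Finset (V × V)) (x : V → ℤ)
    (a : {e : V × V // e ∈ E} → ℤ) : Prop :=
  InKerATV E x a ∧ ¬(x = 0 ∧ a = 0) ∧
    ∀ (x' : V → ℤ) (a' : {e : V × V // e ∈ E} → ℤ),
      InKerATV E x' a' → ¬(x' = 0 ∧ a' = 0) → Sqle x' x → Sqle a' a →
        x' = x ∧ a' = a

/-- The polytope `P` of the linear relaxation of the substituted problem:
`x_u − x_v = a_{(u,v)}` on every edge and `0 ≤ x ≤ Q`. -/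
def PTV {V : Type*} (E : Finset (V × V)) (Q : ℕ) :
    Set ((V → ℝ) × ({e : V × V // e ∈ E} → ℝ)) :=
  {z | (∀ e : {e : V × V // e ∈ E}, z.1 (e : V × V).1 - z.1 (e : V × V).2 = z.2 e) ∧
    ∀ v, 0 ≤ z.1 v ∧ z.1 v ≤ (Q : ℝ)}


section AuxGraver

variable {V : Type*}

/-- The `a`-vector induced by an `x`-vector. -/
noncomputable def aOf (E : Finset (V × V)) (x : V → ℝ) :
    {e : V × V // e ∈ E} → ℝ :=
  fun e => x (e : V × V).1 - x (e : V × V).2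

lemma mem_PTV_aOf {E : Finset (V × V)} {Q : ℕ} {x : V → ℝ}
    (h : ∀ v, 0 ≤ x v ∧ x v ≤ (Q : ℝ)) : (x, aOf E x) ∈ PTV E Q :=
  ⟨fun _ => rfl, h⟩

lemma ep_zero_or_Q [DecidableEq V] {E : Finset (V × V)} {Q : ℕ}
    {z : (V → ℝ) × ({e : V × V // e ∈ E} → ℝ)}
    (hz : z ∈ Set.extremePoints ℝ (PTV E Q)) (v : V) :
    z.1 v = 0 ∨ z.1 v = (Q : ℝ) := by
  by_contra hcon
  push_neg at hcon
  obtain ⟨hzmem, hext⟩ := hz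
  obtain ⟨h0, hQ'⟩ := hzmem.2 v
  set ε : ℝ := min (z.1 v) ((Q : ℝ) - z.1 v) with hεdef
  have hεx : ε ≤ z.1 v := min_le_left _ _
  have hεQ : ε ≤ (Q : ℝ) - z.1 v := min_le_right _ _
  have hε : 0 < ε := lt_min (lt_of_le_of_ne h0 (Ne.symm hcon.1))
    (by have := lt_of_le_of_ne hQ' hcon.2; linarith)
  set y₁ : V → ℝ := fun u => z.1 u + if u = v then ε else 0 with hy₁
  set y₂ : V → ℝ := fun u => z.1 u - if u = v then ε else 0 with hy₂
  have h1 : (y₁, aOf E y₁) ∈ PTV E Q := mem_PTV_aOf (by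
    intro u
    by_cases hu : u = v
    · subst hu
      simp only [hy₁, if_pos rfl, if_true]
      constructor
      · linarith
      · linarith
    · simp only [hy₁, if_neg hu, add_zero]
      exact hzmem.2 u)
  have h2 : (y₂, aOf E y₂) ∈ PTV E Q := mem_PTV_aOf (by
    intro u
    by_cases hu : u = v
    · subst hu
      simp only [hy₂, if_pos rfl, if_true]
      constructor
      · linarith
      · linarith
    · simp only [hy₂, if_neg hu, sub_zero]
      exact hzmem.2 u)
  have hopen : z ∈ openSegment ℝ (y₁, aOf E y₁) (y₂, aOf E y₂) := by
    refine ⟨1/2, 1/2, by norm_num, by norm_num, by norm_num, ?_⟩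
    have hx : ((1:ℝ)/2) • y₁ + ((1:ℝ)/2) • y₂ = z.1 := by
      funext u
      simp only [hy₁, hy₂, Pi.add_apply, Pi.smul_apply, smul_eq_mul]
      ring
    apply Prod.ext
    · exact hx
    · funext e
      have hc := hzmem.1 e
      simp only [Prod.snd_add, Prod.smul_snd, Pi.add_apply, Pi.smul_apply,
        smul_eq_mul, aOf, hy₁, hy₂]
      rw [← hc]
      ring
  have := hext h1 h2 hopen
  have h1z : (y₁, aOf E y₁) = z := this
  have := congrArg (fun p => p.1 v) h1z
  simp only [hy₁, if_pos rfl, if_true] at this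
  linarith

end AuxGraver

/-- Edges of the polytope `P` are integer multiples of the
connected-subgraph Graver moves: if `z₁ ≠ z₂` are extreme points of `P` whose
segment is an extreme subset of `P`, then `z₁ − z₂ = c (χ_S, χ_{δ⁺(S)} − χ_{δ⁻(S)})`
for a set `S` inducing a connected subgraph and a nonzero integer `c`. -/
theorem polytope_edges_are_graver_multiples
    {V : Type*} [Fintype V] [DecidableEq V] (E : Finset (V × V))
    (hloop : ∀ e ∈ E, e.1 ≠ e.2) (Q : ℕ) (hQ : 1 ≤ Q)
    (z₁ z₂ : (V → ℝ) × ({e : V × V // e ∈ E} → ℝ))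
    (hne : z₁ ≠ z₂)
    (h₁ : z₁ ∈ Set.extremePoints ℝ (PTV E Q))
    (h₂ : z₂ ∈ Set.extremePoints ℝ (PTV E Q))
    (hedge : IsExtreme ℝ (PTV E Q) (segment ℝ z₁ z₂)) :
    ∃ (S : Set V) (c : ℤ), InducesConnected E S ∧ c ≠ 0 ∧
      (z₁.1 - z₂.1 = fun v => ((c * chiV S v : ℤ) : ℝ)) ∧
      (z₁.2 - z₂.2 = fun f =>
        ((c * (chiE (deltaPlus E S) f - chiE (deltaMinus E S) f) : ℤ) : ℝ)) := by
  have hz1 : z₁ ∈ PTV E Q := h₁.1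
  have hz2 : z₂ ∈ PTV E Q := h₂.1
  have hx1 := fun v => ep_zero_or_Q h₁ v
  have hx2 := fun v => ep_zero_or_Q h₂ v
  -- the x-parts differ somewhere
  have hxne : z₁.1 ≠ z₂.1 := by
    intro h
    apply hne
    apply Prod.ext h
    funext e
    rw [← hz1.1 e, ← hz2.1 e, h]
  obtain ⟨v₀, hv₀⟩ : ∃ v, z₁.1 v ≠ z₂.1 v := by
    by_contra h; push_neg at h; exact hxne (funext h)
  -- all other coordinates agree (adjacency on the cube)
  have huniq : ∀ w, w ≠ v₀ → z₁.1 w = z₂.1 w := by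
    intro w hw
    by_contra hwne
    set y : V → ℝ := Function.update z₁.1 v₀ (z₂.1 v₀) with hy
    set y' : V → ℝ := Function.update z₂.1 v₀ (z₁.1 v₀) with hy'
    have hp : (y, aOf E y) ∈ PTV E Q := mem_PTV_aOf (by
      intro u
      by_cases hu : u = v₀
      · subst hu; rw [hy, Function.update_self]; exact hz2.2 u
      · rw [hy, Function.update_of_ne hu]; exact hz1.2 u)
    have hq : (y', aOf E y') ∈ PTV E Q := mem_PTV_aOf (by
      intro u
      by_cases hu : u = v₀
      · subst hu; rw [hy', Function.update_self]; exact hz1.2 u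
      · rw [hy', Function.update_of_ne hu]; exact hz2.2 u)
    have hyadd : ∀ u, y u + y' u = z₁.1 u + z₂.1 u := by
      intro u
      by_cases hu : u = v₀
      · subst hu
        rw [hy, hy', Function.update_self, Function.update_self]; ring
      · rw [hy, hy', Function.update_of_ne hu, Function.update_of_ne hu]
    have hm : ((1:ℝ)/2) • z₁ + ((1:ℝ)/2) • z₂ ∈ segment ℝ z₁ z₂ :=
      ⟨1/2, 1/2, by norm_num, by norm_num, by norm_num, rfl⟩
    have hmo : ((1:ℝ)/2) • z₁ + ((1:ℝ)/2) • z₂ ∈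
        openSegment ℝ (y, aOf E y) (y', aOf E y') := by
      refine ⟨1/2, 1/2, by norm_num, by norm_num, by norm_num, ?_⟩
      apply Prod.ext
      · funext u
        have := hyadd u
        simp only [Prod.fst_add, Prod.smul_fst, Pi.add_apply, Pi.smul_apply,
          smul_eq_mul]
        linarith
      · funext e
        have hc1 := hz1.1 e
        have hc2 := hz2.1 e
        have ha := hyadd (e : V × V).1
        have hb := hyadd (e : V × V).2
        simp only [Prod.snd_add, Prod.smul_snd, Pi.add_apply, Pi.smul_apply,
          smul_eq_mul, aOf]
        rw [← hc1, ← hc2]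
        linarith
    have hpseg := hedge.2 hp hq hm hmo
    obtain ⟨a, b, ha, hb, hab, hsum⟩ := hpseg
    have hw' : a * z₁.1 w + b * z₂.1 w = z₁.1 w := by
      have := congrArg (fun p => p.1 w) hsum
      simpa [hy, Function.update_of_ne hw] using this
    have hb0 : b = 0 := by
      by_contra hb0
      apply hwne
      have h1 : b * (z₂.1 w - z₁.1 w) = 0 := by
        linear_combination hw' - z₁.1 w * hab
      have := mul_eq_zero.mp h1
      rcases this with h | h
      · exact absurd h hb0
      · linarith
    have ha1 : a = 1 := by linarith
    have := congrArg (fun p => p.1 v₀) hsum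
    simp only [Prod.smul_fst, Prod.fst_add, Pi.add_apply, Pi.smul_apply,
      smul_eq_mul, hb0, ha1, one_mul, zero_mul, add_zero, hy,
      Function.update_self] at this
    exact hv₀ this
  -- determine c
  obtain ⟨c, hc0, hcval⟩ : ∃ c : ℤ, c ≠ 0 ∧ (c : ℝ) = z₁.1 v₀ - z₂.1 v₀ := by
    have hQ0 : (Q : ℤ) ≠ 0 := by positivity
    rcases hx1 v₀ with h10 | h1Q <;> rcases hx2 v₀ with h20 | h2Q
    · exact absurd (h10.trans h20.symm) hv₀
    · exact ⟨-(Q : ℤ), by simpa using hQ0, by push_cast; rw [h10, h2Q]; ring⟩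
    · exact ⟨(Q : ℤ), hQ0, by push_cast; rw [h1Q, h20]; ring⟩
    · exact absurd (h1Q.trans h2Q.symm) hv₀
  refine ⟨{v₀}, c, ⟨⟨v₀, rfl⟩, ?_⟩, hc0, ?_, ?_⟩
  · haveI : Nonempty (({v₀} : Set V)) := ⟨⟨v₀, rfl⟩⟩
    exact ⟨fun u u' => by rw [Subsingleton.elim u u']⟩
  · funext v
    by_cases hv : v = v₀
    · subst hv
      simp only [Pi.sub_apply, chiV, Set.indicator, Set.mem_singleton_iff,
        if_pos rfl, if_true, Pi.one_apply, mul_one]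
      exact hcval.symm
    · simp only [Pi.sub_apply, chiV, Set.indicator, Set.mem_singleton_iff,
        if_neg hv, mul_zero, Int.cast_zero]
      rw [huniq v hv]; ring
  · funext e
    have hc1 := hz1.1 e
    have hc2 := hz2.1 e
    have hne12 : (e : V × V).1 ≠ (e : V × V).2 := hloop _ e.2
    have key : ∀ u, z₁.1 u - z₂.1 u = if u = v₀ then (c : ℝ) else 0 := by
      intro u
      by_cases hu : u = v₀
      · subst hu; rw [if_pos rfl, hcval]
      · rw [if_neg hu, huniq u hu]; ring
    have hLHS : (z₁.2 - z₂.2) e =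
        (if (e : V × V).1 = v₀ then (c : ℝ) else 0)
        - (if (e : V × V).2 = v₀ then (c : ℝ) else 0) := by
      rw [Pi.sub_apply, ← hc1, ← hc2, ← key, ← key]
      ring
    rw [hLHS]
    by_cases h1 : (e : V × V).1 = v₀ <;> by_cases h2 : (e : V × V).2 = v₀
    · exact absurd (h1.trans h2.symm) hne12
    · simp [chiE, deltaPlus, deltaMinus, Set.indicator, h1, h2]
    · simp [chiE, deltaPlus, deltaMinus, Set.indicator, h1, h2]
    · simp [chiE, deltaPlus, deltaMinus, Set.indicator, h1, h2]
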